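/- Let X be a real Banach space, k ≥ 1, q ≥ 1, and let P : X → X be a continuous linear projection (P ∘ P = P) with ‖P‖ ≤ q and closed range Y. If X is k-self-extensible, then Y (with the norm inherited from X) is (q·k)-self-extensible. In particular, if X has the self-extension property and ‖P‖ ≤ 1, then Y has the self-extension property. -/

import Mathlib

/-- For `k ≥ 1`, a real Banach space `X` is **`k`-self-extensible** if every continuous linear
operator on a closed subspace of `X` extends to an operator on `X` of norm at most `k` times
the original norm. -/
def KSelfExt (X : Type*) [NormedAddCommGroup X] [NormedSpace ℝ X] (k : ℝ) : Prop :=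
  ∀ (Y : Submodule ℝ X), IsClosed (Y : Set X) → ∀ T : Y →L[ℝ] Y,
    ∃ S : X →L[ℝ] X, (∀ y : Y, S y = (T y : X)) ∧ ‖S‖ ≤ k * ‖T‖

/-- A real Banach space `X` has the **self-extension property** if every continuous linear
operator on a closed subspace of `X` extends to an operator on `X` with the same norm. -/
def SelfExt (X : Type*) [NormedAddCommGroup X] [NormedSpace ℝ X] : Prop :=
  ∀ (Y : Submodule ℝ X), IsClosed (Y : Set X) → ∀ T : Y →L[ℝ] Y,
    ∃ S : X →L[ℝ] X, (∀ y : Y, S y = (T y : X)) ∧ ‖S‖ = ‖T‖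

section Aux

variable {X : Type*} [NormedAddCommGroup X] [NormedSpace ℝ X]

/-- Key construction: given a projection `P` with closed range `Y`, a closed subspace `Z` of
`Y` and an operator `T : Z → Z`, there is a closed subspace `Z'` of `X` and `T' : Z' → Z'`
with `‖T'‖ = ‖T‖`, such that any extension `S : X → X` of `T'` yields `SY : Y → Y`
extending `T` with `‖T‖ ≤ ‖SY‖ ≤ ‖P‖ * ‖S‖`. -/
lemma aux_key (P : X →L[ℝ] X) (hP : ∀ x, P (P x) = P x)
    (hclosed : IsClosed ((LinearMap.range (P : X →ₗ[ℝ] X) : Submodule ℝ X) : Set X))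
    (Z : Submodule ℝ ↥(LinearMap.range (P : X →ₗ[ℝ] X)))
    (hZ : IsClosed (Z : Set ↥(LinearMap.range (P : X →ₗ[ℝ] X)))) (T : Z →L[ℝ] Z) :
    ∃ Z' : Submodule ℝ X, IsClosed (Z' : Set X) ∧ ∃ T' : Z' →L[ℝ] Z', ‖T'‖ = ‖T‖ ∧
      ∀ S : X →L[ℝ] X, (∀ z : Z', S z = (T' z : X)) →
        ∃ SY : ↥(LinearMap.range (P : X →ₗ[ℝ] X)) →L[ℝ] ↥(LinearMap.range (P : X →ₗ[ℝ] X)),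
          (∀ z : Z, SY z = (T z : ↥(LinearMap.range (P : X →ₗ[ℝ] X)))) ∧ ‖T‖ ≤ ‖SY‖ ∧ ‖SY‖ ≤ ‖P‖ * ‖S‖ := by
  have hfix : ∀ y ∈ LinearMap.range (P : X →ₗ[ℝ] X), P y = y := by
    rintro y ⟨w, rfl⟩
    exact hP w
  refine ⟨Z.map (LinearMap.range (P : X →ₗ[ℝ] X)).subtype, ?_, ?_⟩
  · have : ((Z.map (LinearMap.range (P : X →ₗ[ℝ] X)).subtype : Submodule ℝ X) : Set X) = (↑) '' (Z : Set ↥(LinearMap.range (P : X →ₗ[ℝ] X))) := by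
      simp [Submodule.map_coe]
    rw [this]
    exact hclosed.isClosedEmbedding_subtypeVal.isClosedMap _ hZ
  · -- the isometric equivalence between Z and its image
    let e : Z ≃ₗᵢ[ℝ] (Z.map (LinearMap.range (P : X →ₗ[ℝ] X)).subtype) :=
      { toLinearEquiv := Z.equivMapOfInjective (LinearMap.range (P : X →ₗ[ℝ] X)).subtype (LinearMap.range (P : X →ₗ[ℝ] X)).injective_subtype
        norm_map' := fun z => rfl }
    let T' : (Z.map (LinearMap.range (P : X →ₗ[ℝ] X)).subtype) →L[ℝ] (Z.map (LinearMap.range (P : X →ₗ[ℝ] X)).subtype) :=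
      (e.toContinuousLinearEquiv : Z →L[ℝ] Z.map (LinearMap.range (P : X →ₗ[ℝ] X)).subtype).comp
        (T.comp (e.symm.toContinuousLinearEquiv : Z.map (LinearMap.range (P : X →ₗ[ℝ] X)).subtype →L[ℝ] Z))
    have hT'apply : ∀ z' : Z.map (LinearMap.range (P : X →ₗ[ℝ] X)).subtype, T' z' = e (T (e.symm z')) := fun z' => rfl
    have hT'norm : ‖T'‖ = ‖T‖ := by
      apply le_antisymm
      · refine ContinuousLinearMap.opNorm_le_bound _ (norm_nonneg T) fun z' => ?_
        rw [hT'apply, e.norm_map]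
        calc ‖T (e.symm z')‖ ≤ ‖T‖ * ‖e.symm z'‖ := T.le_opNorm _
          _ = ‖T‖ * ‖z'‖ := by rw [e.symm.norm_map]
      · refine ContinuousLinearMap.opNorm_le_bound _ (norm_nonneg T') fun z => ?_
        have : T z = e.symm (T' (e z)) := by rw [hT'apply, e.symm_apply_apply, e.symm_apply_apply]
        rw [this, e.symm.norm_map]
        calc ‖T' (e z)‖ ≤ ‖T'‖ * ‖e z‖ := T'.le_opNorm _
          _ = ‖T'‖ * ‖z‖ := by rw [e.norm_map]
    refine ⟨T', hT'norm, fun S hS => ?_⟩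
    -- define SY : Y → Y
    let SY : ↥(LinearMap.range (P : X →ₗ[ℝ] X)) →L[ℝ] ↥(LinearMap.range (P : X →ₗ[ℝ] X)) :=
      ((P.comp S).comp (LinearMap.range (P : X →ₗ[ℝ] X)).subtypeL).codRestrict (LinearMap.range (P : X →ₗ[ℝ] X)) (fun y => ⟨S y, rfl⟩)
    have hSYapply : ∀ y : LinearMap.range (P : X →ₗ[ℝ] X), (SY y : X) = P (S (y : X)) := fun y => rfl
    have hext : ∀ z : Z, SY z = (T z : ↥(LinearMap.range (P : X →ₗ[ℝ] X))) := by
      intro z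
      apply Subtype.ext
      rw [hSYapply]
      have h1 : ((z : ↥(LinearMap.range (P : X →ₗ[ℝ] X))) : X) = ((e z : Z.map (LinearMap.range (P : X →ₗ[ℝ] X)).subtype) : X) := rfl
      have h2 : S ((e z : Z.map (LinearMap.range (P : X →ₗ[ℝ] X)).subtype) : X) = (T' (e z) : X) := hS (e z)
      have h3 : T' (e z) = e (T z) := by rw [hT'apply, e.symm_apply_apply]
      have h4 : ((e (T z) : Z.map (LinearMap.range (P : X →ₗ[ℝ] X)).subtype) : X) = (((T z : Z) : ↥(LinearMap.range (P : X →ₗ[ℝ] X))) : X) := rfl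
      rw [h1, h2, h3, h4]
      exact hfix _ (((T z : Z) : ↥(LinearMap.range (P : X →ₗ[ℝ] X)))).2
    refine ⟨SY, hext, ?_, ?_⟩
    · refine ContinuousLinearMap.opNorm_le_bound _ (norm_nonneg SY) fun z => ?_
      have : (T z : ↥(LinearMap.range (P : X →ₗ[ℝ] X))) = SY z := (hext z).symm
      calc ‖T z‖ = ‖SY (z : ↥(LinearMap.range (P : X →ₗ[ℝ] X)))‖ := by rw [← this]; rfl
        _ ≤ ‖SY‖ * ‖(z : ↥(LinearMap.range (P : X →ₗ[ℝ] X)))‖ := SY.le_opNorm _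
        _ = ‖SY‖ * ‖z‖ := rfl
    · refine ContinuousLinearMap.opNorm_le_bound _
        (mul_nonneg (norm_nonneg P) (norm_nonneg S)) fun y => ?_
      have : ‖SY y‖ = ‖P (S (y : X))‖ := by rw [← hSYapply]; rfl
      rw [this]
      calc ‖P (S (y : X))‖ ≤ ‖P‖ * ‖S (y : X)‖ := P.le_opNorm _
        _ ≤ ‖P‖ * (‖S‖ * ‖(y : X)‖) :=
            mul_le_mul_of_nonneg_left (S.le_opNorm _) (norm_nonneg P)
        _ = ‖P‖ * ‖S‖ * ‖y‖ := by rw [mul_assoc]; rfl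

end Aux

/-- If `P : X → X` is a continuous linear projection with `‖P‖ ≤ q` and closed range `Y`, and
`X` is `k`-self-extensible, then `Y` (with the inherited norm) is `q·k`-self-extensible.
In particular, if `X` has the self-extension property and `‖P‖ ≤ 1`, then so does `Y`. -/
theorem kSelfExt_of_complemented (X : Type*) [NormedAddCommGroup X] [NormedSpace ℝ X]
    [CompleteSpace X] (k q : ℝ) (hk : 1 ≤ k) (hq : 1 ≤ q)
    (P : X →L[ℝ] X) (hP : ∀ x, P (P x) = P x) (hPnorm : ‖P‖ ≤ q)
    (hclosed : IsClosed ((LinearMap.range (P : X →ₗ[ℝ] X) : Submodule ℝ X) : Set X)) :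
    (KSelfExt X k → KSelfExt ↥(LinearMap.range (P : X →ₗ[ℝ] X)) (q * k)) ∧
      (SelfExt X → ‖P‖ ≤ 1 → SelfExt ↥(LinearMap.range (P : X →ₗ[ℝ] X))) := by
  constructor
  · intro hX Z hZ T
    obtain ⟨Z', hZ', T', hT'norm, hmain⟩ := aux_key P hP hclosed Z hZ T
    obtain ⟨S, hSext, hSnorm⟩ := hX Z' hZ' T'
    obtain ⟨SY, hSYext, _, hSYnorm⟩ := hmain S hSext
    refine ⟨SY, hSYext, ?_⟩
    calc ‖SY‖ ≤ ‖P‖ * ‖S‖ := hSYnorm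
      _ ≤ q * (k * ‖T'‖) := by
          apply mul_le_mul hPnorm hSnorm (norm_nonneg S) (le_trans zero_le_one hq)
      _ = q * k * ‖T‖ := by rw [hT'norm, mul_assoc]
  · intro hX hP1 Z hZ T
    obtain ⟨Z', hZ', T', hT'norm, hmain⟩ := aux_key P hP hclosed Z hZ T
    obtain ⟨S, hSext, hSnorm⟩ := hX Z' hZ' T'
    obtain ⟨SY, hSYext, hlow, hSYnorm⟩ := hmain S hSext
    refine ⟨SY, hSYext, le_antisymm ?_ hlow⟩
    calc ‖SY‖ ≤ ‖P‖ * ‖S‖ := hSYnorm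
      _ ≤ 1 * ‖T‖ := by
          rw [hSnorm, hT'norm]
          exact mul_le_mul_of_nonneg_right hP1 (norm_nonneg T)
      _ = ‖T‖ := one_mul _
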